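/- Let z₀ ∈ ℝⁿ with ‖z₀‖₂ = 1, ν ∈ (0,1], and let R = {z ∈ S^{n−1} : ‖z − z₀‖² ≤ ν}. Suppose f : ℝⁿ → ℝ is twice continuously differentiable and its Riemannian Hessian on the sphere is positive definite at every z ∈ R, i.e., vᵀ∇²f(z)v − (zᵀ∇f(z))‖v‖² > 0 for all nonzero v with vᵀz = 0. Then f has at most one local minimizer on R. -/

import Mathlib

open Real Filter Set Topology

namespace Stmt15Aux

variable {n : ℕ}

lemma sum_comb (a b a' b' : ℝ) (x y : Fin n → ℝ) :
    ∑ k, (a * x k + b * y k) * (a' * x k + b' * y k)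
      = a * a' * ∑ k, x k * x k + (a * b' + a' * b) * ∑ k, x k * y k
        + b * b' * ∑ k, y k * y k := by
  simp only [Finset.mul_sum, ← Finset.sum_add_distrib]
  exact Finset.sum_congr rfl fun k _ => by ring

lemma sum_lin (a b : ℝ) (x y w : Fin n → ℝ) :
    ∑ k, (a * x k + b * y k) * w k
      = a * ∑ k, x k * w k + b * ∑ k, y k * w k := by
  simp only [Finset.mul_sum, ← Finset.sum_add_distrib]
  exact Finset.sum_congr rfl fun k _ => by ring

lemma sum_lin' (a b : ℝ) (x y w : Fin n → ℝ) :
    ∑ k, w k * (a * x k + b * y k)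
      = a * ∑ k, w k * x k + b * ∑ k, w k * y k := by
  simp only [Finset.mul_sum, ← Finset.sum_add_distrib]
  exact Finset.sum_congr rfl fun k _ => by ring

lemma sum_sub_sq (x y : Fin n → ℝ) :
    ∑ k, (x k - y k) ^ 2
      = ∑ k, x k * x k - 2 * ∑ k, x k * y k + ∑ k, y k * y k := by
  simp only [Finset.mul_sum, ← Finset.sum_add_distrib, ← Finset.sum_sub_distrib]
  exact Finset.sum_congr rfl fun k _ => by ring

lemma sum_sq_eq (x : Fin n → ℝ) : ∑ k, x k ^ 2 = ∑ k, x k * x k :=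
  Finset.sum_congr rfl fun k _ => sq (x k)

end Stmt15Aux

open Stmt15Aux

set_option maxHeartbeats 1000000 in
theorem stmt15 {n : ℕ} (z₀ : Fin n → ℝ) (hz₀ : ∑ k, z₀ k ^ 2 = 1)
    (ν : ℝ) (hν : 0 < ν) (hν1 : ν ≤ 1)
    (f : (Fin n → ℝ) → ℝ) (hf : ContDiff ℝ 2 f)
    (R : Set (Fin n → ℝ))
    (hR : R = {z | ∑ k, z k ^ 2 = 1 ∧ ∑ k, (z k - z₀ k) ^ 2 ≤ ν})
    (hHess : ∀ z ∈ R, ∀ v : Fin n → ℝ, v ≠ 0 → ∑ k, v k * z k = 0 →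
      0 < fderiv ℝ (fun w => fderiv ℝ f w v) z v
        - (fderiv ℝ f z z) * ∑ k, v k ^ 2) :
    ∀ z₁ ∈ R, ∀ z₂ ∈ R, IsLocalMinOn f R z₁ → IsLocalMinOn f R z₂ → z₁ = z₂ := by
  intro z₁ hz₁ z₂ hz₂ h₁ h₂
  by_contra hne
  have hz₁' := hz₁; have hz₂' := hz₂
  rw [hR] at hz₁' hz₂'
  obtain ⟨hz₁n, hz₁c⟩ := hz₁'
  obtain ⟨hz₂n, hz₂c⟩ := hz₂'
  rw [sum_sq_eq] at hz₀ hz₁n hz₂n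
  rw [sum_sub_sq, hz₁n, hz₀] at hz₁c
  rw [sum_sub_sq, hz₂n, hz₀] at hz₂c
  set A1 : ℝ := ∑ k, z₁ k * z₀ k with hA1
  set A2 : ℝ := ∑ k, z₂ k * z₀ k with hA2
  have hA1κ : 1 - ν / 2 ≤ A1 := by linarith
  have hA2κ : 1 - ν / 2 ≤ A2 := by linarith
  set c : ℝ := ∑ k, z₁ k * z₂ k with hc
  -- c < 1
  have hc1 : c < 1 := by
    have hpos : 0 < ∑ k, (z₁ k - z₂ k) ^ 2 := by
      obtain ⟨k, hk⟩ := Function.ne_iff.mp hne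
      refine Finset.sum_pos' (fun k _ => sq_nonneg _) ⟨k, Finset.mem_univ k, ?_⟩
      have : z₁ k - z₂ k ≠ 0 := sub_ne_zero.mpr hk
      positivity
    rw [sum_sub_sq, hz₁n, hz₂n] at hpos
    linarith
  -- -1 < c
  have hc2 : -1 < c := by
    by_contra hcon
    push_neg at hcon
    have hnn : 0 ≤ ∑ k, (z₁ k - (fun j => -z₂ j) k) ^ 2 :=
      Finset.sum_nonneg fun k _ => sq_nonneg _
    have hzz : ∑ k, (fun j => -z₂ j) k * (fun j => -z₂ j) k = 1 := by
      simpa [neg_mul_neg] using hz₂n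
    have hzc : ∑ k, z₁ k * (fun j => -z₂ j) k = -c := by
      simp [hc, ← Finset.sum_neg_distrib, mul_comm]
    rw [sum_sub_sq, hz₁n, hzz, hzc] at hnn
    have hceq : c = -1 := le_antisymm hcon (by linarith)
    have hzero : ∑ k, (z₁ k - (fun j => -z₂ j) k) ^ 2 = 0 := by
      rw [sum_sub_sq, hz₁n, hzz, hzc, hceq]; ring
    have hall : ∀ k, z₂ k = -z₁ k := by
      intro k
      have := (Finset.sum_eq_zero_iff_of_nonneg (fun k _ => sq_nonneg
        (z₁ k - (fun j => -z₂ j) k))).mp hzero k (Finset.mem_univ k)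
      have h0 : z₁ k - -z₂ k = 0 := by
        have := pow_eq_zero_iff (n := 2) (by norm_num) |>.mp this
        simpa using this
      linarith [h0]
    have : A2 = -A1 := by
      rw [hA2, hA1, ← Finset.sum_neg_distrib]
      exact Finset.sum_congr rfl fun k _ => by rw [hall k]; ring
    linarith
  -- the geodesic setup
  set s : ℝ := Real.sqrt (1 - c ^ 2) with hsdef
  have h1c : 0 < 1 - c ^ 2 := by nlinarith
  have hs : 0 < s := Real.sqrt_pos.mpr h1c
  have hss : s ^ 2 = 1 - c ^ 2 := Real.sq_sqrt h1c.le
  set v : Fin n → ℝ := fun k => (-(s⁻¹ * c)) * z₁ k + s⁻¹ * z₂ k with hv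
  have hss' : s * s = 1 - c ^ 2 := by nlinarith
  have hsi : s⁻¹ * s = 1 := inv_mul_cancel₀ hs.ne'
  have hvv : ∑ k, v k * v k = 1 := by
    rw [hv]
    rw [sum_comb, hz₁n, hz₂n, ← hc]
    linear_combination (-(s⁻¹ * s⁻¹)) * hss' + (s⁻¹ * s + 1) * hsi
  have h1v : ∑ k, z₁ k * v k = 0 := by
    rw [hv, sum_lin', hz₁n, ← hc]
    ring
  set B : ℝ := ∑ k, v k * z₀ k with hB
  set d : ℝ := Real.arccos c with hd
  have hd0 : 0 < d := Real.arccos_pos.mpr hc1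
  have hdπ : d < π := by
    have h := Real.neg_pi_div_two_lt_arcsin.mpr hc2
    rw [hd, Real.arccos]
    linarith
  have hcosd : Real.cos d = c := Real.cos_arccos (by linarith) hc1.le
  have hsind : Real.sin d = s := by rw [hd, Real.sin_arccos]
  set L : ℝ → (Fin n → ℝ) := fun t k => Real.cos t * z₁ k + Real.sin t * v k with hL
  set L' : ℝ → (Fin n → ℝ) := fun t k => (-Real.sin t) * z₁ k + Real.cos t * v k with hL'
  have hLk : ∀ t k, L t k = Real.cos t * z₁ k + Real.sin t * v k := fun t k => rfl
  have hL'k : ∀ t k, L' t k = (-Real.sin t) * z₁ k + Real.cos t * v k := fun t k => rfl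
  have hL0 : L 0 = z₁ := by funext k; rw [hLk]; simp
  have hLd : L d = z₂ := by
    funext k
    rw [hLk, hcosd, hsind, hv]
    show c * z₁ k + s * (-(s⁻¹ * c) * z₁ k + s⁻¹ * z₂ k) = z₂ k
    field_simp
    ring
  have hLderiv : ∀ t, HasDerivAt L (L' t) t := by
    intro t
    rw [hasDerivAt_pi]
    intro k
    exact ((Real.hasDerivAt_cos t).mul_const (z₁ k)).add
      ((Real.hasDerivAt_sin t).mul_const (v k))
  have hL'deriv : ∀ t, HasDerivAt L' (fun k => -(L t k)) t := by
    intro t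
    rw [hasDerivAt_pi]
    intro k
    have h := (((Real.hasDerivAt_sin t).neg).mul_const (z₁ k)).add
      (((Real.hasDerivAt_cos t).mul_const (v k)))
    convert h using 1
    · rfl
    rw [hLk]; ring
  -- norms along the geodesic
  have hLnorm : ∀ t, ∑ k, L t k * L t k = 1 := by
    intro t
    simp only [hLk]
    rw [sum_comb, hz₁n, hvv, h1v]
    nlinarith [Real.sin_sq_add_cos_sq t]
  have hL'norm : ∀ t, ∑ k, L' t k * L' t k = 1 := by
    intro t
    simp only [hL'k]
    rw [sum_comb, hz₁n, hvv, h1v]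
    nlinarith [Real.sin_sq_add_cos_sq t]
  have hL'orth : ∀ t, ∑ k, L' t k * L t k = 0 := by
    intro t
    simp only [hL'k, hLk]
    rw [sum_comb, hz₁n, hvv, h1v]
    ring
  -- the geodesic stays in R
  have hA2eq : A2 = Real.cos d * A1 + Real.sin d * B := by
    rw [hA2, ← hLd]
    simp only [hLk]
    rw [sum_lin, ← hA1, ← hB]
  have hmem : ∀ t ∈ Icc (0:ℝ) d, L t ∈ R := by
    intro t ht
    have hip : ∑ k, L t k * z₀ k = Real.cos t * A1 + Real.sin t * B := by
      simp only [hLk]; rw [sum_lin, ← hA1, ← hB]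
    have hsin1 : 0 ≤ Real.sin t := Real.sin_nonneg_of_nonneg_of_le_pi ht.1 (by linarith [ht.2])
    have hsin2 : 0 ≤ Real.sin (d - t) :=
      Real.sin_nonneg_of_nonneg_of_le_pi (by linarith [ht.2]) (by linarith [ht.1])
    have hsind0 : 0 < Real.sin d := Real.sin_pos_of_pos_of_lt_pi hd0 hdπ
    have hkey : Real.sin d * (Real.cos t * A1 + Real.sin t * B)
        = Real.sin (d - t) * A1 + Real.sin t * A2 := by
      rw [hA2eq, Real.sin_sub]; ring
    have htri : Real.sin d ≤ Real.sin (d - t) + Real.sin t := by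
      have h1 : Real.sin d = Real.sin (d - t) * Real.cos t + Real.cos (d - t) * Real.sin t := by
        rw [← Real.sin_add]; ring_nf
      nlinarith [Real.cos_le_one t, Real.cos_le_one (d - t)]
    have hκ : (0:ℝ) < 1 - ν / 2 := by linarith
    have hbound : 1 - ν / 2 ≤ Real.cos t * A1 + Real.sin t * B := by
      have h2 : Real.sin d * (1 - ν / 2) ≤ Real.sin d * (Real.cos t * A1 + Real.sin t * B) := by
        rw [hkey]
        nlinarith
      exact le_of_mul_le_mul_left h2 hsind0
    rw [hR]
    refine ⟨by rw [sum_sq_eq]; exact hLnorm t, ?_⟩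
    rw [sum_sub_sq, hLnorm t, hz₀, hip]
    linarith
  -- derivatives of g = f ∘ L
  have hdf : Differentiable ℝ f := hf.differentiable (by norm_num)
  set G : ℝ → ℝ := fun t => fderiv ℝ f (L t) (L' t) with hG
  have hgderiv : ∀ t, HasDerivAt (fun t => f (L t)) (G t) t := fun t =>
    (hdf (L t)).hasFDerivAt.comp_hasDerivAt t (hLderiv t)
  have hF : ContDiff ℝ 1 (fderiv ℝ f) := hf.fderiv_right (by norm_num)
  have hGderiv : ∀ t, HasDerivAt G
      ((fderiv ℝ (fderiv ℝ f) (L t) (L' t)) (L' t)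
        + fderiv ℝ f (L t) (fun k => -(L t k))) t := by
    intro t
    have h1 : HasDerivAt (fun t => fderiv ℝ f (L t))
        ((fderiv ℝ (fderiv ℝ f) (L t)) (L' t)) t :=
      (hF.differentiable one_ne_zero (L t)).hasFDerivAt.comp_hasDerivAt t (hLderiv t)
    exact h1.clm_apply (hL'deriv t)
  have hGdiff : Differentiable ℝ G := fun t => (hGderiv t).differentiableAt
  have hGpos : ∀ t ∈ Icc (0:ℝ) d, 0 < deriv G t := by
    intro t ht
    rw [(hGderiv t).deriv]
    have hw0 : L' t ≠ 0 := by
      intro h0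
      have := hL'norm t
      rw [h0] at this
      simp at this
    have hh := hHess (L t) (hmem t ht) (L' t) hw0 (hL'orth t)
    have hrw : fderiv ℝ (fun w => fderiv ℝ f w (L' t)) (L t) (L' t)
        = (fderiv ℝ (fderiv ℝ f) (L t) (L' t)) (L' t) := by
      have hcd := fderiv_clm_apply (hF.differentiable one_ne_zero (L t))
        (differentiableAt_const (L' t))
      rw [hcd]
      simp
    have hneg : fderiv ℝ f (L t) (fun k => -(L t k)) = -(fderiv ℝ f (L t) (L t)) := by
      have : (fun k => -(L t k)) = -(L t) := rfl
      rw [this, map_neg]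
    rw [hrw] at hh
    rw [sum_sq_eq, hL'norm t] at hh
    rw [hneg]
    linarith
  have hGmono : StrictMonoOn G (Icc (0:ℝ) d) := by
    refine strictMonoOn_of_deriv_pos (convex_Icc 0 d) hGdiff.continuous.continuousOn ?_
    intro t ht
    rw [interior_Icc] at ht
    exact hGpos t (Ioo_subset_Icc_self ht)
  -- endpoint derivative signs
  have hmin0 : IsLocalMinOn (fun t => f (L t)) (Icc (0:ℝ) d) 0 := by
    have hten : Tendsto L (𝓝[Icc (0:ℝ) d] 0) (𝓝[R] z₁) := by
      have := (hLderiv 0).continuousAt.continuousWithinAt.tendsto_nhdsWithin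
        (fun t ht => hmem t ht)
      rwa [hL0] at this
    have h' := hten.eventually h₁
    simpa [IsLocalMinOn, IsMinFilter, hL0] using h'
  have hmind : IsLocalMinOn (fun t => f (L t)) (Icc (0:ℝ) d) d := by
    have hten : Tendsto L (𝓝[Icc (0:ℝ) d] d) (𝓝[R] z₂) := by
      have := (hLderiv d).continuousAt.continuousWithinAt.tendsto_nhdsWithin
        (fun t ht => hmem t ht)
      rwa [hLd] at this
    have h' := hten.eventually h₂
    simpa [IsLocalMinOn, IsMinFilter, hLd] using h'
  have hcone0 : d ∈ posTangentConeAt (Icc (0:ℝ) d) 0 := by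
    have := sub_mem_posTangentConeAt_of_segment_subset
      (x := (0:ℝ)) (y := d) (s := Icc (0:ℝ) d) (by rw [segment_eq_Icc hd0.le])
    simpa using this
  have hconed : -d ∈ posTangentConeAt (Icc (0:ℝ) d) d := by
    have := sub_mem_posTangentConeAt_of_segment_subset
      (x := d) (y := (0:ℝ)) (s := Icc (0:ℝ) d)
      (by rw [segment_symm, segment_eq_Icc hd0.le])
    simpa using this
  have hsign0 : 0 ≤ G 0 := by
    have h := hmin0.hasFDerivWithinAt_nonneg
      (hgderiv 0).hasDerivWithinAt.hasFDerivWithinAt hcone0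
    simp only [ContinuousLinearMap.smulRight_apply, ContinuousLinearMap.one_apply,
      ContinuousLinearMap.toSpanSingleton_apply, smul_eq_mul] at h
    nlinarith
  have hsignd : G d ≤ 0 := by
    have h := hmind.hasFDerivWithinAt_nonneg
      (hgderiv d).hasDerivWithinAt.hasFDerivWithinAt hconed
    simp only [ContinuousLinearMap.smulRight_apply, ContinuousLinearMap.one_apply,
      ContinuousLinearMap.toSpanSingleton_apply, smul_eq_mul] at h
    nlinarith
  have : G 0 < G d := hGmono ⟨le_refl 0, hd0.le⟩ ⟨hd0.le, le_refl d⟩ hd0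
  linarith
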